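/- Let H be a finite-dimensional Hopf algebra with invertible antipode and left integral Λ, A a left H-module algebra, B = A#H, and M, N B-modules. A B-module map f : M → N factors through the canonical map λ_M : M → M ⊗ H, m ↦ m ⊗ Λ, via a B-module map (i.e. f is null-homotopic) if and only if f = Λ·g for some A-linear map g : M → N, where (Λ·g)(m) = Λ₍₂₎·g(S⁻¹(Λ₍₁₎)·m). -/

import Mathlib

open TensorProduct

noncomputable section

namespace Hopfological

variable (k : Type*) [Field k]

/-- The scalar action of a `k`-algebra `R` on a module `M`, as a `k`-bilinear map. -/
def actL (R M : Type*) [Ring R] [Algebra k R] [AddCommGroup M] [Module k M]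
    [Module R M] [IsScalarTower k R M] [SMulCommClass k R M] :
    R →ₗ[k] M →ₗ[k] M :=
  LinearMap.mk₂ k (· • ·) (fun r r' m => add_smul r r' m) (fun c r m => smul_assoc c r m)
    (fun r m m' => smul_add r m m') (fun c r m => (smul_comm c r m).symm)

@[simp] lemma actL_apply (R M : Type*) [Ring R] [Algebra k R] [AddCommGroup M] [Module k M]
    [Module R M] [IsScalarTower k R M] [SMulCommClass k R M] (r : R) (m : M) :
    actL k R M r m = r • m := rfl

variable (H : Type*) [Ring H] [HopfAlgebra k H]

/-- The diagonal (Sweedler) action of `H` on a tensor product, built from two given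
`k`-linear actions `ρM`, `ρN`:  `h • (m ⊗ n) = ∑ ρM h₁ m ⊗ ρN h₂ n`. -/
def tenActVia {M N : Type*} [AddCommGroup M] [Module k M] [AddCommGroup N] [Module k N]
    (ρM : H →ₗ[k] M →ₗ[k] M) (ρN : H →ₗ[k] N →ₗ[k] N) :
    H →ₗ[k] (M ⊗[k] N) →ₗ[k] (M ⊗[k] N) :=
  (TensorProduct.lift (((TensorProduct.mapBilinear (σ₁₂ := RingHom.id k) (M := M) (N := N) (M₂ := M) (N₂ := N)).comp ρM).compl₂ ρN)).comp
    (Coalgebra.comul (R := k))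

/-- The conjugation (Sweedler) action of `H` on `k`-linear maps:
`(h • f) m = ∑ ρN h₂ (f (ρM (S⁻¹ h₁) m))`. -/
def conjAct (Sinv : H →ₗ[k] H) {M N : Type*} [AddCommGroup M] [Module k M]
    [AddCommGroup N] [Module k N]
    (ρM : H →ₗ[k] M →ₗ[k] M) (ρN : H →ₗ[k] N →ₗ[k] N) :
    H →ₗ[k] (M →ₗ[k] N) →ₗ[k] (M →ₗ[k] N) :=
  (TensorProduct.lift (LinearMap.mk₂ k
      (fun h₁ h₂ => (LinearMap.llcomp k M N N (ρN h₂)).comp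
        (LinearMap.lcomp k N (ρM (Sinv h₁))))
      (fun h₁ h₁' h₂ => by ext f m; simp)
      (fun c h₁ h₂ => by ext f m; simp)
      (fun h₁ h₂ h₂' => by ext f m; simp)
      (fun c h₁ h₂ => by ext f m; simp))).comp (Coalgebra.comul (R := k))

/-- `A` is a left `H`-module algebra with respect to the action `ρ`. -/
def IsModuleAlgebraVia (A : Type*) [Ring A] [Algebra k A]
    (ρ : H →ₗ[k] A →ₗ[k] A) : Prop :=
  (∀ (h h' : H) (a : A), ρ (h * h') a = ρ h (ρ h' a)) ∧
  (∀ a : A, ρ 1 a = a) ∧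
  (∀ (h : H) (a b : A),
    ρ h (a * b) = LinearMap.mul' k A (tenActVia k H ρ ρ h (a ⊗ₜ[k] b))) ∧
  (∀ h : H, ρ h 1 = Coalgebra.counit (R := k) h • (1 : A))

/-- `M` is a module over the smash product `A#H`: the `H`- and `A`-actions satisfy
`h • (a • m) = ∑ (h₁ • a) • (h₂ • m)`. -/
def IsSmashModule (A M : Type*) [Ring A] [Algebra k A] [AddCommGroup M] [Module k M]
    [Module A M] [IsScalarTower k A M] [SMulCommClass k A M]
    [Module H A] [IsScalarTower k H A] [SMulCommClass k H A]
    [Module H M] [IsScalarTower k H M] [SMulCommClass k H M] : Prop :=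
  ∀ (h : H) (a : A) (m : M),
    h • (a • m) =
      TensorProduct.lift
        (LinearMap.mk₂ k (· • ·) (fun a a' m => add_smul a a' m)
          (fun c a m => smul_assoc c a m) (fun a m m' => smul_add a m m')
          (fun c a m => (smul_comm c a m).symm))
        (tenActVia k H (actL k H A) (actL k H M) h (a ⊗ₜ[k] m))


variable (A : Type*) [Ring A] [Algebra k A]
  [Module H A] [IsScalarTower k H A] [SMulCommClass k H A]
variable (M : Type*) [AddCommGroup M] [Module k M]
  [Module A M] [IsScalarTower k A M] [SMulCommClass k A M]
  [Module H M] [IsScalarTower k H M] [SMulCommClass k H M]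
variable (N : Type*) [AddCommGroup N] [Module k N]
  [Module A N] [IsScalarTower k A N] [SMulCommClass k A N]
  [Module H N] [IsScalarTower k H N] [SMulCommClass k H N]

/-- The extension `g̃ : M ⊗ H → N` of a map `g : M → N`, `g̃(m ⊗ h) = (h • g) m
  = ∑ h₂ • g (S⁻¹(h₁) • m)`. -/
def tildeMap (Sinv : H →ₗ[k] H) (g : M →ₗ[k] N) : M ⊗[k] H →ₗ[k] N :=
  TensorProduct.lift (((conjAct k H Sinv (actL k H M) (actL k H N)).flip g).flip)


set_option maxHeartbeats 1000000
set_option synthInstance.maxHeartbeats 400000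

section Conv

variable {C A' : Type*} [AddCommGroup C] [Module k C] [Ring A'] [Algebra k A']
variable (δC : C →ₗ[k] C ⊗[k] C) (εC : C →ₗ[k] k)

/-- Convolution product on `Hom_k(C, A')`. -/
def conv (f g : C →ₗ[k] A') : C →ₗ[k] A' :=
  LinearMap.mul' k A' ∘ₗ TensorProduct.map f g ∘ₗ δC

/-- Convolution unit. -/
def convOne (A' : Type*) [Ring A'] [Algebra k A'] : C →ₗ[k] A' := Algebra.linearMap k A' ∘ₗ εC

end Conv

lemma conv_assoc {C A' : Type*} [AddCommGroup C] [Module k C] [Ring A'] [Algebra k A']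
    (δC : C →ₗ[k] C ⊗[k] C)
    (hco : (TensorProduct.assoc k C C C).toLinearMap ∘ₗ δC.rTensor C ∘ₗ δC
      = δC.lTensor C ∘ₗ δC)
    (f g h : C →ₗ[k] A') :
    conv k δC (conv k δC f g) h = conv k δC f (conv k δC g h) := by
  have hA : TensorProduct.map (LinearMap.mul' k A' ∘ₗ TensorProduct.map f g ∘ₗ δC) h
      = (LinearMap.mul' k A').rTensor A'
        ∘ₗ TensorProduct.map (TensorProduct.map f g) h ∘ₗ δC.rTensor C := by
    apply TensorProduct.ext'
    intro x y
    simp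
  have hC : TensorProduct.map f (LinearMap.mul' k A' ∘ₗ TensorProduct.map g h ∘ₗ δC)
      = (LinearMap.mul' k A').lTensor A'
        ∘ₗ TensorProduct.map f (TensorProduct.map g h) ∘ₗ δC.lTensor C := by
    apply TensorProduct.ext'
    intro x y
    simp
  have hB : ∀ z : (A' ⊗[k] A') ⊗[k] A',
      LinearMap.mul' k A' ((LinearMap.mul' k A').rTensor A' z)
        = LinearMap.mul' k A' ((LinearMap.mul' k A').lTensor A'
            ((TensorProduct.assoc k A' A' A') z)) := by
    intro z
    have : (LinearMap.mul' k A' ∘ₗ (LinearMap.mul' k A').rTensor A')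
        = LinearMap.mul' k A' ∘ₗ (LinearMap.mul' k A').lTensor A'
            ∘ₗ (TensorProduct.assoc k A' A' A').toLinearMap := by
      apply TensorProduct.ext_threefold
      intro a b c
      simp [mul_assoc]
    exact LinearMap.congr_fun this z
  ext x
  simp only [conv, LinearMap.comp_apply, hA, hC]
  have hx : δC.lTensor C (δC x) = (TensorProduct.assoc k C C C) (δC.rTensor C (δC x)) :=
    (LinearMap.congr_fun hco x).symm
  rw [hx, TensorProduct.map_map_assoc, ← hB]

lemma one_conv {C A' : Type*} [AddCommGroup C] [Module k C] [Ring A'] [Algebra k A']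
    (δC : C →ₗ[k] C ⊗[k] C) (εC : C →ₗ[k] k)
    (hrc : εC.rTensor C ∘ₗ δC = TensorProduct.mk k k C 1)
    (f : C →ₗ[k] A') :
    conv k δC (convOne k εC A') f = f := by
  have hsplit : TensorProduct.map (convOne k εC A') f
      = TensorProduct.map (Algebra.linearMap k A') f ∘ₗ εC.rTensor C := by
    apply TensorProduct.ext'
    intro x y
    simp [convOne]
  ext x
  simp only [conv, LinearMap.comp_apply, hsplit]
  have hx := LinearMap.congr_fun hrc x
  simp only [LinearMap.comp_apply] at hx
  rw [hx]
  simp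

lemma conv_one {C A' : Type*} [AddCommGroup C] [Module k C] [Ring A'] [Algebra k A']
    (δC : C →ₗ[k] C ⊗[k] C) (εC : C →ₗ[k] k)
    (hlc : εC.lTensor C ∘ₗ δC = (TensorProduct.mk k C k).flip 1)
    (f : C →ₗ[k] A') :
    conv k δC f (convOne k εC A') = f := by
  have hsplit : TensorProduct.map f (convOne k εC A')
      = TensorProduct.map f (Algebra.linearMap k A') ∘ₗ εC.lTensor C := by
    apply TensorProduct.ext'
    intro x y
    simp [convOne]
  ext x
  simp only [conv, LinearMap.comp_apply, hsplit]
  have hx := LinearMap.congr_fun hlc x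
  simp only [LinearMap.comp_apply] at hx
  rw [hx]
  simp

lemma conv_inv_unique {C A' : Type*} [AddCommGroup C] [Module k C] [Ring A'] [Algebra k A']
    (δC : C →ₗ[k] C ⊗[k] C) (εC : C →ₗ[k] k)
    (hco : (TensorProduct.assoc k C C C).toLinearMap ∘ₗ δC.rTensor C ∘ₗ δC
      = δC.lTensor C ∘ₗ δC)
    (hrc : εC.rTensor C ∘ₗ δC = TensorProduct.mk k k C 1)
    (hlc : εC.lTensor C ∘ₗ δC = (TensorProduct.mk k C k).flip 1)
    (a F G : C →ₗ[k] A')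
    (h1 : conv k δC a F = convOne k εC A')
    (h2 : conv k δC G a = convOne k εC A') : G = F := by
  have : conv k δC (conv k δC G a) F = conv k δC G (conv k δC a F) :=
    conv_assoc k δC hco G a F
  rw [h1, h2, conv_one k δC εC hlc, one_conv k δC εC hrc] at this
  exact this.symm



section Hopf

open Coalgebra HopfAlgebra

/-- `Δ` of `H ⊗ H`. -/
def comul2 : (H ⊗[k] H) →ₗ[k] (H ⊗[k] H) ⊗[k] (H ⊗[k] H) :=
  (tensorTensorTensorComm k H H H H).toLinearMap
    ∘ₗ TensorProduct.map (Coalgebra.comul (R := k)) (Coalgebra.comul (R := k))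

/-- `ε` of `H ⊗ H`. -/
def counit2 : (H ⊗[k] H) →ₗ[k] k :=
  LinearMap.mul' k k ∘ₗ TensorProduct.map (Coalgebra.counit (R := k)) (Coalgebra.counit (R := k))

lemma ext6 {X : Type*} [AddCommGroup X] [Module k X]
    {f g : (((H ⊗[k] H) ⊗[k] H) ⊗[k] ((H ⊗[k] H) ⊗[k] H)) →ₗ[k] X}
    (h : ∀ a b c d e r, f (((a ⊗ₜ[k] b) ⊗ₜ[k] c) ⊗ₜ[k] ((d ⊗ₜ[k] e) ⊗ₜ[k] r))
      = g (((a ⊗ₜ[k] b) ⊗ₜ[k] c) ⊗ₜ[k] ((d ⊗ₜ[k] e) ⊗ₜ[k] r))) : f = g := by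
  apply TensorProduct.ext'
  intro x y
  induction x using TensorProduct.induction_on with
  | zero => simp only [TensorProduct.zero_tmul, LinearMap.map_zero]
  | add u v hu hv => simp only [TensorProduct.add_tmul, LinearMap.map_add, hu, hv]
  | tmul p c =>
    induction p using TensorProduct.induction_on with
    | zero => simp only [TensorProduct.zero_tmul, LinearMap.map_zero]
    | add u v hu hv => simp only [TensorProduct.add_tmul, LinearMap.map_add, hu, hv]
    | tmul a b =>
      induction y using TensorProduct.induction_on with
      | zero => simp only [TensorProduct.tmul_zero, LinearMap.map_zero]
      | add u v hu hv => simp only [TensorProduct.tmul_add, LinearMap.map_add, hu, hv]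
      | tmul q r =>
        induction q using TensorProduct.induction_on with
        | zero => simp only [TensorProduct.zero_tmul, TensorProduct.tmul_zero, LinearMap.map_zero]
        | add u v hu hv =>
            simp only [TensorProduct.add_tmul, TensorProduct.tmul_add, LinearMap.map_add, hu, hv]
        | tmul d e => exact h a b c d e r

lemma comul2_coassoc :
    (TensorProduct.assoc k (H ⊗[k] H) (H ⊗[k] H) (H ⊗[k] H)).toLinearMap
        ∘ₗ (comul2 k H).rTensor (H ⊗[k] H) ∘ₗ comul2 k H
      = (comul2 k H).lTensor (H ⊗[k] H) ∘ₗ comul2 k H := by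
  have A1 : (comul2 k H).rTensor (H ⊗[k] H)
        ∘ₗ (tensorTensorTensorComm k H H H H).toLinearMap
      = ((tensorTensorTensorComm k H H H H).toLinearMap).rTensor (H ⊗[k] H)
          ∘ₗ (tensorTensorTensorComm k (H ⊗[k] H) H (H ⊗[k] H) H).toLinearMap
          ∘ₗ TensorProduct.map ((Coalgebra.comul (R := k) (A := H)).rTensor H)
              ((Coalgebra.comul (R := k) (A := H)).rTensor H) := by
    apply TensorProduct.ext_fourfold'
    intro a b c d
    simp [comul2]
  have A2 : (comul2 k H).lTensor (H ⊗[k] H)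
        ∘ₗ (tensorTensorTensorComm k H H H H).toLinearMap
      = ((tensorTensorTensorComm k H H H H).toLinearMap).lTensor (H ⊗[k] H)
          ∘ₗ (tensorTensorTensorComm k H (H ⊗[k] H) H (H ⊗[k] H)).toLinearMap
          ∘ₗ TensorProduct.map ((Coalgebra.comul (R := k) (A := H)).lTensor H)
              ((Coalgebra.comul (R := k) (A := H)).lTensor H) := by
    apply TensorProduct.ext_fourfold'
    intro a b c d
    simp [comul2]
  have Astruct :
      (TensorProduct.assoc k (H ⊗[k] H) (H ⊗[k] H) (H ⊗[k] H)).toLinearMap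
          ∘ₗ ((tensorTensorTensorComm k H H H H).toLinearMap).rTensor (H ⊗[k] H)
          ∘ₗ (tensorTensorTensorComm k (H ⊗[k] H) H (H ⊗[k] H) H).toLinearMap
        = ((tensorTensorTensorComm k H H H H).toLinearMap).lTensor (H ⊗[k] H)
          ∘ₗ (tensorTensorTensorComm k H (H ⊗[k] H) H (H ⊗[k] H)).toLinearMap
          ∘ₗ TensorProduct.map (TensorProduct.assoc k H H H).toLinearMap
              (TensorProduct.assoc k H H H).toLinearMap := by
    apply TensorProduct.ext'
    intro x y
    induction x using TensorProduct.induction_on with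
    | zero => simp only [TensorProduct.zero_tmul, LinearMap.map_zero]
    | add u v hu hv => simp only [TensorProduct.add_tmul, LinearMap.map_add, hu, hv]
    | tmul p c =>
      induction p using TensorProduct.induction_on with
      | zero => simp only [TensorProduct.zero_tmul, LinearMap.map_zero]
      | add u v hu hv => simp only [TensorProduct.add_tmul, LinearMap.map_add, hu, hv]
      | tmul a b =>
        induction y using TensorProduct.induction_on with
        | zero => simp only [TensorProduct.tmul_zero, LinearMap.map_zero]
        | add u v hu hv => simp only [TensorProduct.tmul_add, LinearMap.map_add, hu, hv]
        | tmul q r =>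
          induction q using TensorProduct.induction_on with
          | zero =>
              simp only [TensorProduct.zero_tmul, TensorProduct.tmul_zero, LinearMap.map_zero]
          | add u v hu hv =>
              simp only [TensorProduct.add_tmul, TensorProduct.tmul_add, LinearMap.map_add,
                hu, hv]
          | tmul d e => simp
  have comb :
      TensorProduct.map (TensorProduct.assoc k H H H).toLinearMap
          (TensorProduct.assoc k H H H).toLinearMap
        ∘ₗ TensorProduct.map ((Coalgebra.comul (R := k) (A := H)).rTensor H)
            ((Coalgebra.comul (R := k) (A := H)).rTensor H)
        ∘ₗ TensorProduct.map (Coalgebra.comul (R := k) (A := H))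
            (Coalgebra.comul (R := k) (A := H))
      = TensorProduct.map ((Coalgebra.comul (R := k) (A := H)).lTensor H)
            ((Coalgebra.comul (R := k) (A := H)).lTensor H)
        ∘ₗ TensorProduct.map (Coalgebra.comul (R := k) (A := H))
            (Coalgebra.comul (R := k) (A := H)) := by
    rw [← TensorProduct.map_comp, ← TensorProduct.map_comp, ← TensorProduct.map_comp]
    congr 1 <;> exact Coalgebra.coassoc (R := k)
  apply LinearMap.ext
  intro w
  simp only [LinearMap.comp_apply]
  have e0 : comul2 k H w
      = (tensorTensorTensorComm k H H H H).toLinearMap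
          (TensorProduct.map (Coalgebra.comul (R := k) (A := H))
            (Coalgebra.comul (R := k) (A := H)) w) := rfl
  rw [e0]
  have A1' := LinearMap.congr_fun A1 (TensorProduct.map (Coalgebra.comul (R := k) (A := H))
      (Coalgebra.comul (R := k) (A := H)) w)
  have A2' := LinearMap.congr_fun A2 (TensorProduct.map (Coalgebra.comul (R := k) (A := H))
      (Coalgebra.comul (R := k) (A := H)) w)
  simp only [LinearMap.comp_apply] at A1' A2'
  rw [A1', A2']
  have As' := LinearMap.congr_fun Astruct
      (TensorProduct.map ((Coalgebra.comul (R := k) (A := H)).rTensor H)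
          ((Coalgebra.comul (R := k) (A := H)).rTensor H)
        (TensorProduct.map (Coalgebra.comul (R := k) (A := H))
          (Coalgebra.comul (R := k) (A := H)) w))
  simp only [LinearMap.comp_apply] at As'
  rw [As']
  have comb' := LinearMap.congr_fun comb w
  simp only [LinearMap.comp_apply] at comb'
  rw [comb']

lemma counit2_rTensor :
    (counit2 k H).rTensor (H ⊗[k] H) ∘ₗ comul2 k H = TensorProduct.mk k k (H ⊗[k] H) 1 := by
  have hA : (counit2 k H).rTensor (H ⊗[k] H)
        ∘ₗ (tensorTensorTensorComm k H H H H).toLinearMap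
      = ((LinearMap.mul' k k).rTensor (H ⊗[k] H))
          ∘ₗ (tensorTensorTensorComm k k H k H).toLinearMap
          ∘ₗ TensorProduct.map ((Coalgebra.counit (R := k) (A := H)).rTensor H)
              ((Coalgebra.counit (R := k) (A := H)).rTensor H) := by
    apply TensorProduct.ext_fourfold'
    intro a b c d
    simp [counit2]
  apply TensorProduct.ext'
  intro x y
  have e0 : comul2 k H (x ⊗ₜ[k] y)
      = (tensorTensorTensorComm k H H H H).toLinearMap
          ((Coalgebra.comul (R := k) x) ⊗ₜ[k] (Coalgebra.comul (R := k) y)) := by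
    simp [comul2]
  have hA' := LinearMap.congr_fun hA
      ((Coalgebra.comul (R := k) x) ⊗ₜ[k] (Coalgebra.comul (R := k) y))
  simp only [LinearMap.comp_apply] at hA'
  rw [LinearMap.comp_apply, e0, hA']
  simp only [TensorProduct.map_tmul]
  rw [Coalgebra.rTensor_counit_comul, Coalgebra.rTensor_counit_comul]
  simp

lemma counit2_lTensor :
    (counit2 k H).lTensor (H ⊗[k] H) ∘ₗ comul2 k H
      = (TensorProduct.mk k (H ⊗[k] H) k).flip 1 := by
  have hA : (counit2 k H).lTensor (H ⊗[k] H)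
        ∘ₗ (tensorTensorTensorComm k H H H H).toLinearMap
      = ((LinearMap.mul' k k).lTensor (H ⊗[k] H))
          ∘ₗ (tensorTensorTensorComm k H k H k).toLinearMap
          ∘ₗ TensorProduct.map ((Coalgebra.counit (R := k) (A := H)).lTensor H)
              ((Coalgebra.counit (R := k) (A := H)).lTensor H) := by
    apply TensorProduct.ext_fourfold'
    intro a b c d
    simp [counit2]
  apply TensorProduct.ext'
  intro x y
  have e0 : comul2 k H (x ⊗ₜ[k] y)
      = (tensorTensorTensorComm k H H H H).toLinearMap
          ((Coalgebra.comul (R := k) x) ⊗ₜ[k] (Coalgebra.comul (R := k) y)) := by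
    simp [comul2]
  have hA' := LinearMap.congr_fun hA
      ((Coalgebra.comul (R := k) x) ⊗ₜ[k] (Coalgebra.comul (R := k) y))
  simp only [LinearMap.comp_apply] at hA'
  rw [LinearMap.comp_apply, e0, hA']
  simp only [TensorProduct.map_tmul]
  rw [Coalgebra.lTensor_counit_comul, Coalgebra.lTensor_counit_comul]
  simp


lemma mulHH : LinearMap.mul' k (H ⊗[k] H)
    = TensorProduct.map (LinearMap.mul' k H) (LinearMap.mul' k H)
      ∘ₗ (tensorTensorTensorComm k H H H H).toLinearMap := by
  apply TensorProduct.ext_fourfold'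
  intro a b c d
  simp [Algebra.TensorProduct.tmul_mul_tmul]

lemma comul_mul_map : LinearMap.mul' k (H ⊗[k] H)
      ∘ₗ TensorProduct.map (Coalgebra.comul (R := k) (A := H)) (Coalgebra.comul (R := k) (A := H))
    = Coalgebra.comul (R := k) ∘ₗ LinearMap.mul' k H := by
  apply TensorProduct.ext'
  intro x y
  simp [Bialgebra.comul_mul]

lemma counit2_eq : counit2 k H = Coalgebra.counit (R := k) ∘ₗ LinearMap.mul' k H := by
  apply TensorProduct.ext'
  intro x y
  simp [counit2, Bialgebra.counit_mul]

lemma keym : TensorProduct.map (LinearMap.mul' k H) (LinearMap.mul' k H) ∘ₗ comul2 k H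
    = Coalgebra.comul (R := k) ∘ₗ LinearMap.mul' k H := by
  rw [comul2, ← LinearMap.comp_assoc, ← mulHH, comul_mul_map]

lemma conv2_mul_SmuL :
    conv k (comul2 k H) (LinearMap.mul' k H)
        (HopfAlgebra.antipode (R := k) ∘ₗ LinearMap.mul' k H)
      = convOne k (counit2 k H) H := by
  have split : TensorProduct.map (LinearMap.mul' k H)
        (HopfAlgebra.antipode (R := k) ∘ₗ LinearMap.mul' k H)
      = (HopfAlgebra.antipode (R := k) (A := H)).lTensor H
        ∘ₗ TensorProduct.map (LinearMap.mul' k H) (LinearMap.mul' k H) := by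
    apply TensorProduct.ext'
    intro x y
    simp
  apply LinearMap.ext
  intro w
  simp only [conv, convOne, LinearMap.comp_apply, split]
  have key' := LinearMap.congr_fun (keym k H) w
  simp only [LinearMap.comp_apply] at key'
  rw [key']
  rw [HopfAlgebra.mul_antipode_lTensor_comul_apply]
  have c2 := LinearMap.congr_fun (counit2_eq k H) w
  simp only [LinearMap.comp_apply] at c2
  rw [c2]
  rfl

lemma conv2_G_mul :
    conv k (comul2 k H)
        (LinearMap.mul' k H ∘ₗ (TensorProduct.comm k H H).toLinearMap
          ∘ₗ TensorProduct.map (HopfAlgebra.antipode (R := k)) (HopfAlgebra.antipode (R := k)))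
        (LinearMap.mul' k H)
      = convOne k (counit2 k H) H := by
  set S := HopfAlgebra.antipode (R := k) (A := H) with hS
  set G' := LinearMap.mul' k H ∘ₗ (TensorProduct.comm k H H).toLinearMap
      ∘ₗ TensorProduct.map S S with hG'
  set Θ := LinearMap.mul' k H ∘ₗ TensorProduct.map G' (LinearMap.mul' k H)
      ∘ₗ (tensorTensorTensorComm k H H H H).toLinearMap with hΘ
  have SL1 : ∀ c d : H,
      Θ ∘ₗ (TensorProduct.mk k (H ⊗[k] H) (H ⊗[k] H)).flip (c ⊗ₜ[k] d)
        = LinearMap.mulRight k d ∘ₗ LinearMap.mulLeft k (S c)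
            ∘ₗ LinearMap.mul' k H ∘ₗ S.rTensor H := by
    intro c d
    apply TensorProduct.ext'
    intro a b
    simp [hΘ, hG', mul_assoc]
  have SL2 : ∀ x : H,
      Θ ∘ₗ TensorProduct.mk k (H ⊗[k] H) (H ⊗[k] H) (Coalgebra.comul (R := k) x)
        = Coalgebra.counit (R := k) x • (LinearMap.mul' k H ∘ₗ S.rTensor H) := by
    intro x
    apply TensorProduct.ext'
    intro c d
    have h1 := LinearMap.congr_fun (SL1 c d) (Coalgebra.comul (R := k) x)
    simp only [LinearMap.comp_apply, LinearMap.flip_apply, TensorProduct.mk_apply] at h1 ⊢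
    rw [h1, HopfAlgebra.mul_antipode_rTensor_comul_apply]
    simp [Algebra.algebraMap_eq_smul_one, mul_smul_comm, smul_mul_assoc]
  apply TensorProduct.ext'
  intro x y
  have e0 : comul2 k H (x ⊗ₜ[k] y)
      = (tensorTensorTensorComm k H H H H).toLinearMap
          ((Coalgebra.comul (R := k) x) ⊗ₜ[k] (Coalgebra.comul (R := k) y)) := by
    simp [comul2]
  have eΘ : conv k (comul2 k H) G' (LinearMap.mul' k H) (x ⊗ₜ[k] y)
      = Θ ((Coalgebra.comul (R := k) x) ⊗ₜ[k] (Coalgebra.comul (R := k) y)) := by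
    simp only [conv, hΘ, LinearMap.comp_apply, e0]
  rw [eΘ]
  have h2 := LinearMap.congr_fun (SL2 x) (Coalgebra.comul (R := k) y)
  simp only [LinearMap.comp_apply, TensorProduct.mk_apply] at h2
  rw [h2]
  simp only [hS] at h2 ⊢
  rw [LinearMap.smul_apply, LinearMap.comp_apply,
    HopfAlgebra.mul_antipode_rTensor_comul_apply]
  simp [convOne, counit2, Algebra.algebraMap_eq_smul_one, smul_smul]

lemma antipode_mul_map :
    HopfAlgebra.antipode (R := k) ∘ₗ LinearMap.mul' k H
      = LinearMap.mul' k H ∘ₗ (TensorProduct.comm k H H).toLinearMap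
          ∘ₗ TensorProduct.map (HopfAlgebra.antipode (R := k)) (HopfAlgebra.antipode (R := k)) := by
  exact (conv_inv_unique k (comul2 k H) (counit2 k H) (comul2_coassoc k H)
    (counit2_rTensor k H) (counit2_lTensor k H) (LinearMap.mul' k H)
    (HopfAlgebra.antipode (R := k) ∘ₗ LinearMap.mul' k H)
    (LinearMap.mul' k H ∘ₗ (TensorProduct.comm k H H).toLinearMap
      ∘ₗ TensorProduct.map (HopfAlgebra.antipode (R := k)) (HopfAlgebra.antipode (R := k)))
    (conv2_mul_SmuL k H) (conv2_G_mul k H)).symm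

lemma antipode_mul (a b : H) :
    HopfAlgebra.antipode (R := k) (a * b)
      = HopfAlgebra.antipode (R := k) b * HopfAlgebra.antipode (R := k) (A := H) a := by
  have := LinearMap.congr_fun (antipode_mul_map k H) (a ⊗ₜ[k] b)
  simpa using this

lemma antipode_one : HopfAlgebra.antipode (R := k) (1 : H) = 1 := by
  have := HopfAlgebra.mul_antipode_rTensor_comul_apply (R := k) (1 : H)
  rw [Bialgebra.comul_one, Algebra.TensorProduct.one_def] at this
  simpa using this

lemma counit_antipode (x : H) :
    Coalgebra.counit (R := k) (HopfAlgebra.antipode (R := k) (A := H) x)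
      = Coalgebra.counit (R := k) x := by
  obtain r := Coalgebra.Repr.arbitrary k x
  have h1 := Coalgebra.sum_tmul_counit_eq (R := k) r
  have h2 := HopfAlgebra.sum_antipode_mul_eq_algebraMap_counit (R := k) r
  have h3 := congrArg (LinearMap.mul' k k
      ∘ₗ TensorProduct.map
        ((Coalgebra.counit (R := k) (A := H)) ∘ₗ HopfAlgebra.antipode (R := k))
        (LinearMap.id (R := k) (M := k))) h1
  have h4 := congrArg (Coalgebra.counit (R := k) (A := H)) h2
  simp only [map_sum, LinearMap.comp_apply, TensorProduct.map_tmul, LinearMap.mul'_apply,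
    LinearMap.id_coe, id_eq] at h3
  simp only [map_sum, Bialgebra.counit_mul, Bialgebra.counit_algebraMap] at h4
  rw [mul_one] at h3
  exact h3.symm.trans h4


lemma conv1_comul_comulS :
    conv k (Coalgebra.comul (R := k) (A := H)) (Coalgebra.comul (R := k) (A := H))
        (Coalgebra.comul (R := k) (A := H) ∘ₗ HopfAlgebra.antipode (R := k))
      = convOne k (Coalgebra.counit (R := k) (A := H)) (H ⊗[k] H) := by
  have split : TensorProduct.map (Coalgebra.comul (R := k) (A := H))
        (Coalgebra.comul (R := k) (A := H) ∘ₗ HopfAlgebra.antipode (R := k))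
      = TensorProduct.map (Coalgebra.comul (R := k) (A := H))
          (Coalgebra.comul (R := k) (A := H))
        ∘ₗ (HopfAlgebra.antipode (R := k) (A := H)).lTensor H := by
    apply TensorProduct.ext'
    intro x y
    simp
  apply LinearMap.ext
  intro x
  simp only [conv, convOne, LinearMap.comp_apply, split]
  have key' := LinearMap.congr_fun (comul_mul_map k H)
      ((HopfAlgebra.antipode (R := k) (A := H)).lTensor H (Coalgebra.comul (R := k) x))
  simp only [LinearMap.comp_apply] at key'
  rw [key', HopfAlgebra.mul_antipode_lTensor_comul_apply, Bialgebra.comul_algebraMap]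
  rfl

lemma conv1_G_comul :
    conv k (Coalgebra.comul (R := k) (A := H))
        ((TensorProduct.comm k H H).toLinearMap
          ∘ₗ TensorProduct.map (HopfAlgebra.antipode (R := k)) (HopfAlgebra.antipode (R := k))
          ∘ₗ Coalgebra.comul (R := k))
        (Coalgebra.comul (R := k) (A := H))
      = convOne k (Coalgebra.counit (R := k) (A := H)) (H ⊗[k] H) := by
  set S := HopfAlgebra.antipode (R := k) (A := H) with hS
  set K' := LinearMap.mul' k H ∘ₗ S.rTensor H with hK'
  set χ := K'.rTensor H ∘ₗ (TensorProduct.assoc k H H H).symm.toLinearMap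
      ∘ₗ LinearMap.lTensor H (Coalgebra.comul (R := k)) with hχ
  set P₅ := LinearMap.lTensor H K' ∘ₗ (TensorProduct.leftComm k H H H).toLinearMap with hP₅
  have axiomK : ∀ w : H, K' (Coalgebra.comul (R := k) w)
      = algebraMap k H (Coalgebra.counit (R := k) w) := by
    intro w
    simp [hK', hS]
  have N2 : ∀ w : H, χ (Coalgebra.comul (R := k) w) = (1 : H) ⊗ₜ[k] w := by
    intro w
    simp only [hχ, LinearMap.comp_apply, LinearEquiv.coe_coe]
    rw [Coalgebra.coassoc_symm_apply]
    rw [← LinearMap.rTensor_comp_apply]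
    have hKδ : K' ∘ₗ Coalgebra.comul (R := k) (A := H)
        = Algebra.linearMap k H ∘ₗ Coalgebra.counit (R := k) := by
      apply LinearMap.ext
      intro u
      simp [axiomK]
    rw [hKδ, LinearMap.rTensor_comp_apply]
    rw [Coalgebra.rTensor_counit_comul]
    simp
  have split1 : TensorProduct.map
        ((TensorProduct.comm k H H).toLinearMap ∘ₗ TensorProduct.map S S
          ∘ₗ Coalgebra.comul (R := k))
        (Coalgebra.comul (R := k) (A := H))
      = TensorProduct.map
          ((TensorProduct.comm k H H).toLinearMap ∘ₗ TensorProduct.map S S)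
          (LinearMap.id (R := k) (M := H ⊗[k] H))
        ∘ₗ LinearMap.lTensor (H ⊗[k] H) (Coalgebra.comul (R := k))
        ∘ₗ LinearMap.rTensor H (Coalgebra.comul (R := k)) := by
    apply TensorProduct.ext'
    intro x y
    simp
  have CGm : LinearMap.mul' k (H ⊗[k] H)
        ∘ₗ TensorProduct.map
            ((TensorProduct.comm k H H).toLinearMap ∘ₗ TensorProduct.map S S)
            (LinearMap.id (R := k) (M := H ⊗[k] H))
        ∘ₗ LinearMap.lTensor (H ⊗[k] H) (Coalgebra.comul (R := k))
      = P₅ ∘ₗ LinearMap.lTensor H χ ∘ₗ (TensorProduct.assoc k H H H).toLinearMap := by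
    apply TensorProduct.ext_threefold
    intro p q z
    have inner : (LinearMap.mul' k (H ⊗[k] H))
          ∘ₗ TensorProduct.mk k (H ⊗[k] H) (H ⊗[k] H) (S q ⊗ₜ[k] S p)
        = P₅ ∘ₗ TensorProduct.mk k H (H ⊗[k] H) p ∘ₗ K'.rTensor H
            ∘ₗ (TensorProduct.assoc k H H H).symm.toLinearMap
            ∘ₗ TensorProduct.mk k H (H ⊗[k] H) q := by
      apply TensorProduct.ext'
      intro u v
      simp only [LinearMap.comp_apply, TensorProduct.mk_apply, LinearEquiv.coe_coe,
        TensorProduct.assoc_symm_tmul, LinearMap.rTensor_tmul, hP₅, hK',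
        TensorProduct.leftComm_tmul, LinearMap.lTensor_tmul, LinearMap.mul'_apply,
        Algebra.TensorProduct.tmul_mul_tmul]
    have inner' := LinearMap.congr_fun inner (Coalgebra.comul (R := k) z)
    simp only [LinearMap.comp_apply, TensorProduct.mk_apply, LinearEquiv.coe_coe] at inner'
    simp only [LinearMap.comp_apply, LinearMap.lTensor_tmul, TensorProduct.map_tmul,
      LinearEquiv.coe_coe, TensorProduct.assoc_tmul, LinearMap.id_coe, id_eq, hχ,
      TensorProduct.comm_tmul]
    exact inner'
  apply LinearMap.ext
  intro x
  simp only [conv, convOne, LinearMap.comp_apply, split1]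
  have CGm' := LinearMap.congr_fun CGm
      (LinearMap.rTensor H (Coalgebra.comul (R := k)) (Coalgebra.comul (R := k) x))
  simp only [LinearMap.comp_apply, LinearEquiv.coe_coe] at CGm'
  rw [CGm', Coalgebra.coassoc_apply, ← LinearMap.lTensor_comp_apply]
  have hχδ : χ ∘ₗ Coalgebra.comul (R := k) (A := H) = TensorProduct.mk k H H 1 := by
    apply LinearMap.ext
    intro u
    simpa using N2 u
  rw [hχδ]
  have final : P₅ ∘ₗ LinearMap.lTensor H (TensorProduct.mk k H H 1)
      = TensorProduct.mk k H H 1 ∘ₗ K' := by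
    apply TensorProduct.ext'
    intro u v
    simp [hP₅]
  have final' := LinearMap.congr_fun final (Coalgebra.comul (R := k) x)
  simp only [LinearMap.comp_apply] at final'
  rw [final', axiomK]
  simp [Algebra.algebraMap_eq_smul_one, TensorProduct.tmul_smul,
    Algebra.TensorProduct.one_def]

lemma antipode_comul_map :
    Coalgebra.comul (R := k) ∘ₗ HopfAlgebra.antipode (R := k) (A := H)
      = (TensorProduct.comm k H H).toLinearMap
          ∘ₗ TensorProduct.map (HopfAlgebra.antipode (R := k)) (HopfAlgebra.antipode (R := k))
          ∘ₗ Coalgebra.comul (R := k) := by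
  exact (conv_inv_unique k (Coalgebra.comul (R := k) (A := H))
    (Coalgebra.counit (R := k) (A := H)) (Coalgebra.coassoc (R := k))
    (Coalgebra.rTensor_counit_comp_comul (R := k))
    (Coalgebra.lTensor_counit_comp_comul (R := k))
    (Coalgebra.comul (R := k) (A := H))
    (Coalgebra.comul (R := k) (A := H) ∘ₗ HopfAlgebra.antipode (R := k))
    ((TensorProduct.comm k H H).toLinearMap
      ∘ₗ TensorProduct.map (HopfAlgebra.antipode (R := k)) (HopfAlgebra.antipode (R := k))
      ∘ₗ Coalgebra.comul (R := k))
    (conv1_comul_comulS k H) (conv1_G_comul k H)).symm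


section Sinv

variable (Sinv : H →ₗ[k] H)

lemma Sinv_one (hS₁ : ∀ h : H, Sinv (HopfAlgebra.antipode (R := k) h) = h) :
    Sinv 1 = 1 := by
  have := hS₁ 1
  rwa [antipode_one] at this

lemma counit_Sinv (hS₂ : ∀ h : H, HopfAlgebra.antipode (R := k) (Sinv h) = h) (x : H) :
    Coalgebra.counit (R := k) (Sinv x) = Coalgebra.counit (R := k) x := by
  have := counit_antipode k H (Sinv x)
  rw [hS₂ x] at this
  exact this.symm

lemma Sinv_mul (hS₁ : ∀ h : H, Sinv (HopfAlgebra.antipode (R := k) h) = h)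
    (hS₂ : ∀ h : H, HopfAlgebra.antipode (R := k) (Sinv h) = h) (a b : H) :
    Sinv (a * b) = Sinv b * Sinv a := by
  have h1 : HopfAlgebra.antipode (R := k) (Sinv b * Sinv a) = a * b := by
    rw [antipode_mul k H, hS₂, hS₂]
  calc Sinv (a * b) = Sinv (HopfAlgebra.antipode (R := k) (Sinv b * Sinv a)) := by rw [h1]
  _ = Sinv b * Sinv a := hS₁ _

lemma comul_Sinv (hS₁ : ∀ h : H, Sinv (HopfAlgebra.antipode (R := k) h) = h)
    (hS₂ : ∀ h : H, HopfAlgebra.antipode (R := k) (Sinv h) = h) (x : H) :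
    Coalgebra.comul (R := k) (Sinv x)
      = TensorProduct.map Sinv Sinv
          ((TensorProduct.comm k H H) (Coalgebra.comul (R := k) x)) := by
  have hcc := LinearMap.congr_fun (antipode_comul_map k H) (Sinv x)
  simp only [LinearMap.comp_apply, LinearEquiv.coe_coe] at hcc
  rw [hS₂ x] at hcc
  have cc : ∀ t : H ⊗[k] H, (TensorProduct.comm k H H) ((TensorProduct.comm k H H) t) = t := by
    intro t
    induction t using TensorProduct.induction_on with
    | zero => simp
    | tmul a b => simp
    | add u v hu hv => simp [hu, hv]
  have ms : ∀ u : H ⊗[k] H, TensorProduct.map Sinv Sinv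
      (TensorProduct.map (HopfAlgebra.antipode (R := k)) (HopfAlgebra.antipode (R := k)) u)
      = u := by
    intro u
    induction u using TensorProduct.induction_on with
    | zero => simp
    | tmul a b => simp [hS₁]
    | add u v hu hv => simp [hu, hv]
  have h2 := congrArg (fun t => TensorProduct.map Sinv Sinv ((TensorProduct.comm k H H) t)) hcc
  rw [cc, ms] at h2
  exact h2.symm

lemma Kb_delta (hS₁ : ∀ h : H, Sinv (HopfAlgebra.antipode (R := k) h) = h)
    (hS₂ : ∀ h : H, HopfAlgebra.antipode (R := k) (Sinv h) = h) (x : H) :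
    LinearMap.mul' k H (Sinv.lTensor H
        ((TensorProduct.comm k H H) (Coalgebra.comul (R := k) x)))
      = algebraMap k H (Coalgebra.counit (R := k) x) := by
  have ax := HopfAlgebra.mul_antipode_rTensor_comul_apply (R := k) (Sinv x)
  rw [comul_Sinv k H Sinv hS₁ hS₂ x] at ax
  have key : ∀ t : H ⊗[k] H,
      (HopfAlgebra.antipode (R := k) (A := H)).rTensor H (TensorProduct.map Sinv Sinv t)
        = Sinv.lTensor H t := by
    intro t
    induction t using TensorProduct.induction_on with
    | zero => simp
    | tmul a b => simp [hS₂]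
    | add u v hu hv => simp [hu, hv]
  rw [key] at ax
  rw [counit_Sinv k H Sinv hS₂ x] at ax
  exact ax

lemma Kc_delta (hS₁ : ∀ h : H, Sinv (HopfAlgebra.antipode (R := k) h) = h)
    (hS₂ : ∀ h : H, HopfAlgebra.antipode (R := k) (Sinv h) = h) (x : H) :
    LinearMap.mul' k H (Sinv.rTensor H
        ((TensorProduct.comm k H H) (Coalgebra.comul (R := k) x)))
      = algebraMap k H (Coalgebra.counit (R := k) x) := by
  have ax := HopfAlgebra.mul_antipode_lTensor_comul_apply (R := k) (Sinv x)
  rw [comul_Sinv k H Sinv hS₁ hS₂ x] at ax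
  have key : ∀ t : H ⊗[k] H,
      (HopfAlgebra.antipode (R := k) (A := H)).lTensor H (TensorProduct.map Sinv Sinv t)
        = Sinv.rTensor H t := by
    intro t
    induction t using TensorProduct.induction_on with
    | zero => simp
    | tmul a b => simp [hS₂]
    | add u v hu hv => simp [hu, hv]
  rw [key] at ax
  rw [counit_Sinv k H Sinv hS₂ x] at ax
  exact ax

lemma F1 (hS₁ : ∀ h : H, Sinv (HopfAlgebra.antipode (R := k) h) = h)
    (hS₂ : ∀ h : H, HopfAlgebra.antipode (R := k) (Sinv h) = h) (x : H) :
    (LinearMap.mul' k H ∘ₗ Sinv.lTensor H ∘ₗ (TensorProduct.comm k H H).toLinearMap).rTensor H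
        ((Coalgebra.comul (R := k) (A := H)).rTensor H (Coalgebra.comul (R := k) x))
      = (1 : H) ⊗ₜ[k] x := by
  rw [← LinearMap.rTensor_comp_apply]
  have hKδ : (LinearMap.mul' k H ∘ₗ Sinv.lTensor H ∘ₗ (TensorProduct.comm k H H).toLinearMap)
        ∘ₗ Coalgebra.comul (R := k) (A := H)
      = Algebra.linearMap k H ∘ₗ Coalgebra.counit (R := k) := by
    apply LinearMap.ext
    intro u
    simpa using Kb_delta k H Sinv hS₁ hS₂ u
  rw [hKδ, LinearMap.rTensor_comp_apply, Coalgebra.rTensor_counit_comul]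
  simp

lemma F2 (hS₁ : ∀ h : H, Sinv (HopfAlgebra.antipode (R := k) h) = h)
    (hS₂ : ∀ h : H, HopfAlgebra.antipode (R := k) (Sinv h) = h) (x : H) :
    (LinearMap.mul' k H ∘ₗ Sinv.rTensor H ∘ₗ (TensorProduct.comm k H H).toLinearMap).rTensor H
        ((Coalgebra.comul (R := k) (A := H)).rTensor H (Coalgebra.comul (R := k) x))
      = (1 : H) ⊗ₜ[k] x := by
  rw [← LinearMap.rTensor_comp_apply]
  have hKδ : (LinearMap.mul' k H ∘ₗ Sinv.rTensor H ∘ₗ (TensorProduct.comm k H H).toLinearMap)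
        ∘ₗ Coalgebra.comul (R := k) (A := H)
      = Algebra.linearMap k H ∘ₗ Coalgebra.counit (R := k) := by
    apply LinearMap.ext
    intro u
    simpa using Kc_delta k H Sinv hS₁ hS₂ u
  rw [hKδ, LinearMap.rTensor_comp_apply, Coalgebra.rTensor_counit_comul]
  simp

end Sinv

end Hopf



/-- The body of `conjAct` as a map on `H ⊗ H`. -/
def conjB (Sinv : H →ₗ[k] H) :
    (H ⊗[k] H) →ₗ[k] (M →ₗ[k] N) →ₗ[k] (M →ₗ[k] N) :=
  TensorProduct.lift (LinearMap.mk₂ k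
      (fun h₁ h₂ => (LinearMap.llcomp k M N N ((actL k H N) h₂)).comp
        (LinearMap.lcomp k N ((actL k H M) (Sinv h₁))))
      (fun h₁ h₁' h₂ => by ext f m; simp)
      (fun c h₁ h₂ => by ext f m; simp)
      (fun h₁ h₂ h₂' => by ext f m; simp)
      (fun c h₁ h₂ => by ext f m; simp))

/-- Evaluation of the conjugation action: `t ↦ (t ⋅ g) m`. -/
def evMap (Sinv : H →ₗ[k] H) (g : M →ₗ[k] N) (m : M) : (H ⊗[k] H) →ₗ[k] N :=
  LinearMap.applyₗ m ∘ₗ LinearMap.applyₗ g ∘ₗ conjB k H M N Sinv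

lemma evMap_tmul (Sinv : H →ₗ[k] H) (g : M →ₗ[k] N) (m : M) (x y : H) :
    evMap k H M N Sinv g m (x ⊗ₜ[k] y) = y • g (Sinv x • m) := by
  simp [evMap, conjB]

lemma conjAct_eval (Sinv : H →ₗ[k] H) (g : M →ₗ[k] N) (m : M) (h : H) :
    conjAct k H Sinv (actL k H M) (actL k H N) h g m
      = evMap k H M N Sinv g m (Coalgebra.comul (R := k) h) := rfl

/-- Evaluation of the diagonal action `tenActVia`: `t ↦ (lift of t) x`. -/
def DM {P Q : Type*} [AddCommGroup P] [Module k P] [AddCommGroup Q] [Module k Q]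
    (ρP : H →ₗ[k] P →ₗ[k] P) (ρQ : H →ₗ[k] Q →ₗ[k] Q) (x : P ⊗[k] Q) :
    (H ⊗[k] H) →ₗ[k] (P ⊗[k] Q) :=
  LinearMap.applyₗ x ∘ₗ
    TensorProduct.lift (((TensorProduct.mapBilinear (σ₁₂ := RingHom.id k) (M := P) (N := Q) (M₂ := P) (N₂ := Q)).comp ρP).compl₂ ρQ)

lemma tenActVia_eval {P Q : Type*} [AddCommGroup P] [Module k P] [AddCommGroup Q] [Module k Q]
    (ρP : H →ₗ[k] P →ₗ[k] P) (ρQ : H →ₗ[k] Q →ₗ[k] Q) (x : P ⊗[k] Q) (l : H) :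
    tenActVia k H ρP ρQ l x = DM k H ρP ρQ x (Coalgebra.comul (R := k) l) := rfl

lemma DM_tmul {P Q : Type*} [AddCommGroup P] [Module k P] [AddCommGroup Q] [Module k Q]
    (ρP : H →ₗ[k] P →ₗ[k] P) (ρQ : H →ₗ[k] Q →ₗ[k] Q) (p : P) (q : Q) (u v : H) :
    DM k H ρP ρQ (p ⊗ₜ[k] q) (u ⊗ₜ[k] v) = ρP u p ⊗ₜ[k] ρQ v q := by
  simp [DM, TensorProduct.mapBilinear]

/-- The scalar multiplication `A ⊗ M → M`, as used in `IsSmashModule`. -/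
def smashMul (P : Type*) [AddCommGroup P] [Module k P]
    [Module A P] [IsScalarTower k A P] [SMulCommClass k A P] : A ⊗[k] P →ₗ[k] P :=
  TensorProduct.lift
    (LinearMap.mk₂ k (· • ·) (fun a a' m => add_smul a a' m)
      (fun c a m => smul_assoc c a m) (fun a m m' => smul_add a m m')
      (fun c a m => (smul_comm c a m).symm))

lemma smash_eval {P : Type*} [AddCommGroup P] [Module k P]
    [Module A P] [IsScalarTower k A P] [SMulCommClass k A P]
    [Module H P] [IsScalarTower k H P] [SMulCommClass k H P]
    (hP : IsSmashModule k H A P) (l : H) (a : A) (p : P) :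
    l • (a • p)
      = smashMul k A P ((DM k H (actL k H A) (actL k H P) (a ⊗ₜ[k] p))
          (Coalgebra.comul (R := k) l)) :=
  hP l a p



/-- `t ↦ (t ⋅ g)` as a linear map valued in `Hom(M,N)`. -/
def EVm (Sinv : H →ₗ[k] H) (g : M →ₗ[k] N) : (H ⊗[k] H) →ₗ[k] M →ₗ[k] N :=
  LinearMap.applyₗ g ∘ₗ conjB k H M N Sinv

lemma EVm_tmul (Sinv : H →ₗ[k] H) (g : M →ₗ[k] N) (x y : H) (m' : M) :
    EVm k H M N Sinv g (x ⊗ₜ[k] y) m' = y • g (Sinv x • m') := by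
  simp [EVm, conjB]

lemma evMap_eq_EVm (Sinv : H →ₗ[k] H) (g : M →ₗ[k] N) (m : M) (t : H ⊗[k] H) :
    evMap k H M N Sinv g m t = EVm k H M N Sinv g t m := rfl

lemma tildeMap_tmul (Sinv : H →ₗ[k] H) (g : M →ₗ[k] N) (m : M) (h : H) :
    tildeMap k H M N Sinv g (m ⊗ₜ[k] h)
      = evMap k H M N Sinv g m (Coalgebra.comul (R := k) h) := rfl

lemma smashMul_tmul {P : Type*} [AddCommGroup P] [Module k P]
    [Module A P] [IsScalarTower k A P] [SMulCommClass k A P] (a : A) (p : P) :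
    smashMul k A P (a ⊗ₜ[k] p) = a • p := by
  simp [smashMul]

/-- Let `Λ` be a left integral of the finite-dimensional Hopf algebra `H`
and `f : M → N` a `B = A#H`-module map.  Then `f` factors through
`λ_M : M → M ⊗ H, m ↦ m ⊗ Λ` via a `B`-module map (i.e. `f` is null-homotopic) if and only
if `f = Λ • g` for some `A`-linear map `g : M → N`, where
`(Λ • g)(m) = ∑ Λ₂ • g (S⁻¹(Λ₁) • m)`. -/
theorem nullhomotopic_iff_integral_action [FiniteDimensional k H]
    (Sinv : H →ₗ[k] H)
    (hS₁ : ∀ h : H, Sinv (HopfAlgebra.antipode (R := k) h) = h)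
    (hS₂ : ∀ h : H, HopfAlgebra.antipode (R := k) (Sinv h) = h)
    (Λ : H) (hΛ : ∀ h : H, h * Λ = Coalgebra.counit (R := k) h • Λ) (hΛ0 : Λ ≠ 0)
    (hA : IsModuleAlgebraVia k H A (actL k H A))
    (hM : IsSmashModule k H A M) (hN : IsSmashModule k H A N)
    (f : M →ₗ[k] N)
    (hfA : ∀ (a : A) (m : M), f (a • m) = a • f m)
    (hfH : ∀ (h : H) (m : M), f (h • m) = h • f m) :
    (∃ G : M ⊗[k] H →ₗ[k] N,
        (∀ (a : A) (m : M) (h : H), G ((a • m) ⊗ₜ[k] h) = a • G (m ⊗ₜ[k] h)) ∧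
        (∀ (l : H) (x : M ⊗[k] H),
            G (tenActVia k H (actL k H M) (actL k H H) l x) = l • G x) ∧
        (∀ m : M, G (m ⊗ₜ[k] Λ) = f m)) ↔
      (∃ g : M →ₗ[k] N, (∀ (a : A) (m : M), g (a • m) = a • g m) ∧
        f = conjAct k H Sinv (actL k H M) (actL k H N) Λ g) := by
  constructor
  · rintro ⟨G, hG1, hG2, hG3⟩
    refine ⟨G ∘ₗ (TensorProduct.mk k M H).flip 1, ?_, ?_⟩
    · intro a m
      simpa using hG1 a m 1
    · apply LinearMap.ext
      intro m
      rw [conjAct_eval]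
      set g : M →ₗ[k] N := G ∘ₗ (TensorProduct.mk k M H).flip 1 with hgdef
      set Kb : H ⊗[k] H →ₗ[k] H := LinearMap.mul' k H ∘ₗ Sinv.lTensor H
          ∘ₗ (TensorProduct.comm k H H).toLinearMap with hKb
      set Φ : H ⊗[k] H →ₗ[k] N := G ∘ₗ TensorProduct.map ((actL k H M).flip m)
          (LinearMap.id (R := k) (M := H)) with hΦ
      set Φ' : H ⊗[k] (H ⊗[k] H) →ₗ[k] N := Φ ∘ₗ Kb.rTensor H
          ∘ₗ (TensorProduct.assoc k H H H).symm.toLinearMap with hΦ'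
      have P1 : evMap k H M N Sinv g m
          = Φ' ∘ₗ LinearMap.lTensor H (Coalgebra.comul (R := k)) := by
        apply TensorProduct.ext'
        intro h₁ h₂
        have e1 : evMap k H M N Sinv g m (h₁ ⊗ₜ[k] h₂)
            = h₂ • G ((Sinv h₁ • m) ⊗ₜ[k] (1 : H)) := by
          rw [evMap_tmul]
          simp [hgdef]
        have e2 : h₂ • G ((Sinv h₁ • m) ⊗ₜ[k] (1 : H))
            = G (tenActVia k H (actL k H M) (actL k H H) h₂ ((Sinv h₁ • m) ⊗ₜ[k] (1 : H))) :=
          (hG2 h₂ _).symm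
        rw [e1, e2, tenActVia_eval]
        have inner : G ∘ₗ DM k H (actL k H M) (actL k H H) ((Sinv h₁ • m) ⊗ₜ[k] (1 : H))
            = Φ' ∘ₗ TensorProduct.mk k H (H ⊗[k] H) h₁ := by
          apply TensorProduct.ext'
          intro u v
          simp only [LinearMap.comp_apply, TensorProduct.mk_apply, DM_tmul, actL_apply,
            hΦ', hΦ, hKb, LinearEquiv.coe_coe, TensorProduct.assoc_symm_tmul,
            LinearMap.rTensor_tmul, TensorProduct.map_tmul, LinearMap.flip_apply,
            TensorProduct.comm_tmul, LinearMap.lTensor_tmul, LinearMap.mul'_apply,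
            LinearMap.id_coe, id_eq, smul_eq_mul, mul_one]
          rw [mul_smul]
        have inner' := LinearMap.congr_fun inner (Coalgebra.comul (R := k) h₂)
        simp only [LinearMap.comp_apply, TensorProduct.mk_apply] at inner'
        rw [inner']
        simp
      have P2 := LinearMap.congr_fun P1 (Coalgebra.comul (R := k) Λ)
      simp only [LinearMap.comp_apply] at P2
      rw [P2]
      rw [hΦ']
      simp only [LinearMap.comp_apply, LinearEquiv.coe_coe]
      rw [Coalgebra.coassoc_symm_apply]
      rw [hKb]
      rw [F1 k H Sinv hS₁ hS₂ Λ]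
      rw [hΦ]
      simp only [LinearMap.comp_apply, TensorProduct.map_tmul, LinearMap.flip_apply,
        actL_apply, LinearMap.id_coe, id_eq, one_smul]
      exact (hG3 m).symm
  · rintro ⟨g, hg, hf⟩
    refine ⟨tildeMap k H M N Sinv g, ?_, ?_, ?_⟩
    · -- A-linearity
      intro a m h
      rw [tildeMap_tmul, tildeMap_tmul]
      set θ : H ⊗[k] H →ₗ[k] N := TensorProduct.lift (LinearMap.mk₂ k
          (fun u v => (Sinv v • a) • g (Sinv u • m))
          (fun u u' v => by simp [map_add, add_smul, smul_add])
          (fun c u v => by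
            simp only [map_smul, smul_assoc, LinearMap.map_smul]
            rw [smul_comm])
          (fun u v v' => by simp [map_add, add_smul])
          (fun c u v => by simp [map_smul, smul_assoc])) with hθ
      set liftL : (H ⊗[k] H) ⊗[k] H →ₗ[k] N :=
        TensorProduct.lift ((actL k H N).flip ∘ₗ θ) with hliftL
      have step1 : evMap k H M N Sinv g (a • m)
          = liftL ∘ₗ LinearMap.rTensor H (Coalgebra.comul (R := k)) := by
        apply TensorProduct.ext'
        intro h₁ h₂
        rw [evMap_tmul, smash_eval k H A hM (Sinv h₁) a m,
          comul_Sinv k H Sinv hS₁ hS₂ h₁]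
        have inner : (actL k H N h₂) ∘ₗ g ∘ₗ smashMul k A M
              ∘ₗ DM k H (actL k H A) (actL k H M) (a ⊗ₜ[k] m)
              ∘ₗ TensorProduct.map Sinv Sinv ∘ₗ (TensorProduct.comm k H H).toLinearMap
            = liftL ∘ₗ (TensorProduct.mk k (H ⊗[k] H) H).flip h₂ := by
          apply TensorProduct.ext'
          intro u v
          simp only [LinearMap.comp_apply, LinearEquiv.coe_coe, TensorProduct.comm_tmul,
            TensorProduct.map_tmul, DM_tmul, actL_apply, smashMul_tmul,
            LinearMap.flip_apply, TensorProduct.mk_apply, hliftL, TensorProduct.lift.tmul,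
            hθ, LinearMap.mk₂_apply]
          rw [hg]
        have inner' := LinearMap.congr_fun inner (Coalgebra.comul (R := k) h₁)
        simp only [LinearMap.comp_apply, LinearMap.flip_apply, TensorProduct.mk_apply,
          LinearEquiv.coe_coe, actL_apply] at inner'
        rw [inner']
        simp
      set Kb : H ⊗[k] H →ₗ[k] H := LinearMap.mul' k H ∘ₗ Sinv.lTensor H
          ∘ₗ (TensorProduct.comm k H H).toLinearMap with hKb
      set χb : H ⊗[k] H →ₗ[k] H ⊗[k] H := Kb.rTensor H
          ∘ₗ (TensorProduct.assoc k H H H).symm.toLinearMap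
          ∘ₗ LinearMap.lTensor H (Coalgebra.comul (R := k)) with hχb
      set base : H ⊗[k] H →ₗ[k] N →ₗ[k] N := TensorProduct.lift (LinearMap.mk₂ k
          (fun (c : H) (v : H) => (actL k A N ((actL k H A c) a)) ∘ₗ (actL k H N v))
          (fun c c' v => by ext n; simp [add_smul])
          (fun c₀ c v => by ext n; simp [smul_assoc])
          (fun c v v' => by ext n; simp [add_smul, smul_add])
          (fun c₀ c v => by
            ext n
            simp only [LinearMap.comp_apply, actL_apply, LinearMap.smul_apply, smul_assoc]
            rw [smul_comm])) with hbase
      set P₄ : H ⊗[k] (H ⊗[k] H) →ₗ[k] N :=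
        TensorProduct.lift (base.flip ∘ₗ g ∘ₗ ((actL k H M).flip m) ∘ₗ Sinv) with hP₄
      have step2 : liftL = P₄ ∘ₗ LinearMap.lTensor H χb
          ∘ₗ (TensorProduct.assoc k H H H).toLinearMap := by
        apply TensorProduct.ext_threefold
        intro u v w
        have inner2 : smashMul k A N
              ∘ₗ DM k H (actL k H A) (actL k H N) ((Sinv v • a) ⊗ₜ[k] (g (Sinv u • m)))
            = P₄ ∘ₗ TensorProduct.mk k H (H ⊗[k] H) u ∘ₗ Kb.rTensor H
                ∘ₗ (TensorProduct.assoc k H H H).symm.toLinearMap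
                ∘ₗ TensorProduct.mk k H (H ⊗[k] H) v := by
          apply TensorProduct.ext'
          intro c d
          simp only [LinearMap.comp_apply, TensorProduct.mk_apply, LinearEquiv.coe_coe,
            TensorProduct.assoc_symm_tmul, LinearMap.rTensor_tmul, hKb,
            TensorProduct.comm_tmul, LinearMap.lTensor_tmul, LinearMap.mul'_apply,
            DM_tmul, actL_apply, smashMul_tmul, hP₄, TensorProduct.lift.tmul,
            LinearMap.flip_apply, hbase, LinearMap.mk₂_apply]
          rw [mul_smul]
        have lhs1 : liftL ((u ⊗ₜ[k] v) ⊗ₜ[k] w) = w • ((Sinv v • a) • g (Sinv u • m)) := by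
          simp [hliftL, hθ]
        rw [lhs1, smash_eval k H A hN w (Sinv v • a) (g (Sinv u • m))]
        have inner2' := LinearMap.congr_fun inner2 (Coalgebra.comul (R := k) w)
        simp only [LinearMap.comp_apply, TensorProduct.mk_apply] at inner2'
        rw [inner2']
        simp only [LinearMap.comp_apply, LinearEquiv.coe_coe, TensorProduct.assoc_tmul,
          LinearMap.lTensor_tmul, hχb]
      have χbδ : χb ∘ₗ Coalgebra.comul (R := k) (A := H) = TensorProduct.mk k H H 1 := by
        apply LinearMap.ext
        intro w
        simp only [hχb, LinearMap.comp_apply, LinearEquiv.coe_coe, TensorProduct.mk_apply]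
        rw [Coalgebra.coassoc_symm_apply, hKb]
        exact F1 k H Sinv hS₁ hS₂ w
      have step1' := LinearMap.congr_fun step1 (Coalgebra.comul (R := k) h)
      simp only [LinearMap.comp_apply] at step1'
      rw [step1']
      have step2' := LinearMap.congr_fun step2
          ((Coalgebra.comul (R := k) (A := H)).rTensor H (Coalgebra.comul (R := k) h))
      simp only [LinearMap.comp_apply, LinearEquiv.coe_coe] at step2'
      rw [step2', Coalgebra.coassoc_apply, ← LinearMap.lTensor_comp_apply, χbδ]
      have final4 : P₄ ∘ₗ LinearMap.lTensor H (TensorProduct.mk k H H 1)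
          = actL k A N a ∘ₗ evMap k H M N Sinv g m := by
        apply TensorProduct.ext'
        intro p v
        simp only [LinearMap.comp_apply, LinearMap.lTensor_tmul, TensorProduct.mk_apply,
          hP₄, TensorProduct.lift.tmul, LinearMap.flip_apply, hbase, LinearMap.mk₂_apply,
          actL_apply, evMap_tmul, one_smul]
      have := LinearMap.congr_fun final4 (Coalgebra.comul (R := k) h)
      simp only [LinearMap.comp_apply] at this
      rw [this, actL_apply]
    · -- H-equivariance
      intro l x
      have mapEq : tildeMap k H M N Sinv g ∘ₗ tenActVia k H (actL k H M) (actL k H H) l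
          = actL k H N l ∘ₗ tildeMap k H M N Sinv g := by
        apply TensorProduct.ext'
        intro m h
        simp only [LinearMap.comp_apply, actL_apply]
        rw [tenActVia_eval, tildeMap_tmul]
        set J : H ⊗[k] (H ⊗[k] H) →ₗ[k] N := TensorProduct.lift
            (((EVm k H M N Sinv g ∘ₗ LinearMap.mulRight k (Coalgebra.comul (R := k) h)).flip)
              ∘ₗ ((actL k H M).flip m)) with hJ
        have CH1 : tildeMap k H M N Sinv g ∘ₗ DM k H (actL k H M) (actL k H H) (m ⊗ₜ[k] h)
            = J ∘ₗ LinearMap.lTensor H (Coalgebra.comul (R := k)) := by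
          apply TensorProduct.ext'
          intro u v
          simp only [LinearMap.comp_apply, DM_tmul, actL_apply, LinearMap.lTensor_tmul]
          rw [smul_eq_mul]
          rw [show tildeMap k H M N Sinv g ((u • m) ⊗ₜ[k] (v * h))
              = evMap k H M N Sinv g (u • m) (Coalgebra.comul (R := k) (v * h)) from rfl]
          rw [Bialgebra.comul_mul]
          simp only [hJ, TensorProduct.lift.tmul, LinearMap.comp_apply, LinearMap.flip_apply,
            actL_apply, LinearMap.mulRight_apply]
          rfl
        set Kc : H ⊗[k] H →ₗ[k] H := LinearMap.mul' k H ∘ₗ Sinv.rTensor H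
            ∘ₗ (TensorProduct.comm k H H).toLinearMap with hKc
        set Q : H ⊗[k] H →ₗ[k] N := TensorProduct.lift
            (((EVm k H M N Sinv g ∘ₗ LinearMap.mulRight k (Coalgebra.comul (R := k) h)
                ∘ₗ TensorProduct.mk k H H 1).flip)
              ∘ₗ ((actL k H M).flip m)) with hQ
        have CH3 : J ∘ₗ (TensorProduct.assoc k H H H).toLinearMap
            = Q ∘ₗ Kc.rTensor H := by
          apply TensorProduct.ext_threefold
          intro u p w
          have inner3 : LinearMap.applyₗ ((u : H) • m) ∘ₗ EVm k H M N Sinv g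
                ∘ₗ LinearMap.mulLeft k (p ⊗ₜ[k] w)
              = LinearMap.applyₗ ((Sinv p * u) • m) ∘ₗ EVm k H M N Sinv g
                ∘ₗ LinearMap.mulLeft k ((1 : H) ⊗ₜ[k] w) := by
            apply TensorProduct.ext'
            intro c d
            simp only [LinearMap.comp_apply, LinearMap.mulLeft_apply,
              Algebra.TensorProduct.tmul_mul_tmul, LinearMap.applyₗ_apply_apply, EVm_tmul,
              one_mul]
            rw [Sinv_mul k H Sinv hS₁ hS₂]
            simp [mul_smul]
          have inner3' := LinearMap.congr_fun inner3 (Coalgebra.comul (R := k) h)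
          simp only [LinearMap.comp_apply, LinearMap.mulLeft_apply,
            LinearMap.applyₗ_apply_apply] at inner3'
          simp only [LinearMap.comp_apply, LinearEquiv.coe_coe, TensorProduct.assoc_tmul,
            LinearMap.rTensor_tmul, hKc, TensorProduct.comm_tmul, LinearMap.mul'_apply,
            hJ, hQ, TensorProduct.lift.tmul, LinearMap.flip_apply, actL_apply,
            LinearMap.mulRight_apply, TensorProduct.mk_apply]
          exact inner3'
        have CH1' := LinearMap.congr_fun CH1 (Coalgebra.comul (R := k) l)
        simp only [LinearMap.comp_apply] at CH1'
        rw [CH1']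
        rw [← Coalgebra.coassoc_apply]
        have CH3' := LinearMap.congr_fun CH3
            ((Coalgebra.comul (R := k) (A := H)).rTensor H (Coalgebra.comul (R := k) l))
        simp only [LinearMap.comp_apply, LinearEquiv.coe_coe] at CH3'
        rw [CH3', hKc, F2 k H Sinv hS₁ hS₂ l]
        have CH4 : LinearMap.applyₗ (m : M) ∘ₗ EVm k H M N Sinv g
              ∘ₗ LinearMap.mulLeft k ((1 : H) ⊗ₜ[k] l)
            = actL k H N l ∘ₗ LinearMap.applyₗ (m : M) ∘ₗ EVm k H M N Sinv g := by
          apply TensorProduct.ext'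
          intro c d
          simp only [LinearMap.comp_apply, LinearMap.mulLeft_apply,
            Algebra.TensorProduct.tmul_mul_tmul, LinearMap.applyₗ_apply_apply, EVm_tmul,
            one_mul, actL_apply, mul_smul]
        have CH4' := LinearMap.congr_fun CH4 (Coalgebra.comul (R := k) h)
        simp only [LinearMap.comp_apply, LinearMap.mulLeft_apply, LinearMap.applyₗ_apply_apply,
          actL_apply] at CH4'
        simp only [hQ, TensorProduct.lift.tmul, LinearMap.comp_apply, LinearMap.flip_apply,
          actL_apply, LinearMap.mulRight_apply, TensorProduct.mk_apply, one_smul]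
        rw [CH4']
        rfl
      have := LinearMap.congr_fun mapEq x
      simp only [LinearMap.comp_apply, actL_apply] at this
      exact this
    · -- value at Λ
      intro m
      rw [tildeMap_tmul, ← conjAct_eval]
      exact (LinearMap.congr_fun hf m).symm

end Hopfological
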